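/- For every natural number n, the word σ^n([white]) obtained by applying n times the Fibonacci substitution σ to the one-letter word [white] contains no two consecutive occurrences of the letter black; that is, in the sequence of colours of the nodes at level n of the Fibonacci tree, a black node is always in between two white ones and never adjacent to another black node. -/

import Mathlib

/-- Colours: `false` = white, `true` = black. The Fibonacci substitution on letters:
σ(white) = [white, black, white], σ(black) = [black, white]. -/
def fibSubLetter : Bool → List Bool
  | false => [false, true, false]
  | true  => [true, false]

/-- The Fibonacci substitution extended to words by concatenation. -/
def fibSub (w : List Bool) : List Bool := w.flatMap fibSubLetter

lemma fibSub_chain' (w : List Bool) :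
    (fibSub w).Chain' (fun a b => a = false ∨ b = false) := by
  induction w with
  | nil => simp [fibSub, List.Chain']
  | cons b w ih =>
    have h : fibSub (b :: w) = fibSubLetter b ++ fibSub w := by
      simp [fibSub]
    rw [h, List.Chain', List.isChain_append]
    refine ⟨?_, ih, ?_⟩
    · cases b <;> simp [fibSubLetter]
    · intro x hx y _
      cases b <;> simp [fibSubLetter] at hx <;> simp [hx]

/-- For every `n`, the word `σ^n([white])` contains no two consecutive occurrences of
the letter black: a black node at level `n` of the Fibonacci tree is never adjacent
to another black node. -/
theorem fibWord_no_two_consecutive_blacks (n : ℕ) :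
    ¬ ([true, true] <:+: fibSub^[n] [false]) := by
  cases n with
  | zero =>
    intro h
    have := h.length_le
    simp at this
  | succ n =>
    rw [Function.iterate_succ_apply']
    intro h
    have h2 := (fibSub_chain' (fibSub^[n] [false])).infix h
    simp [List.Chain', List.isChain_cons] at h2
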